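/- There is an absolute constant c such that for any DAG G with a unique sink and all vertices of indegree 0 or 2, and any d ≥ 1, there is a resolution refutation of the pebbling contradiction Peb_G^d of length at most c·d²·|V(G)| and width at most c·d. -/

import Mathlib

/-- A clause: a finite set of literals, where a literal is a variable paired
with its polarity. -/
abbrev RClause (V : Type) := Finset (V × Bool)

/-- A clause configuration: a finite set of clauses. -/
abbrev RConfig (V : Type) := Finset (RClause V)

/-- A truth value assignment satisfies a clause if it satisfies some literal in it. -/
def RClause.sat {V : Type} (α : V → Bool) (C : RClause V) : Prop :=
  ∃ l ∈ C, α l.1 = l.2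

/-- A set of clauses logically implies a clause. -/
def CnfImplies {V : Type} (F : Set (RClause V)) (D : RClause V) : Prop :=
  ∀ α : V → Bool, (∀ C ∈ F, RClause.sat α C) → RClause.sat α D

/-- One step of resolution from a CNF formula `F`: axiom download, erasure,
or inference of a resolvent. -/
inductive ResStep {V : Type} [DecidableEq V] (F : Set (RClause V)) :
    RConfig V → RConfig V → Prop
  | download {C : RConfig V} {D : RClause V} (hD : D ∈ F) : ResStep F C (insert D C)
  | delete {C : RConfig V} {D : RClause V} (hD : D ∈ C) : ResStep F C (C.erase D)
  | infer {C : RConfig V} {C₁ C₂ : RClause V} {x : V}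
      (h₁ : C₁ ∈ C) (h₂ : C₂ ∈ C) (hx₁ : (x, true) ∈ C₁) (hx₂ : (x, false) ∈ C₂) :
      ResStep F C (insert (C₁.erase (x, true) ∪ C₂.erase (x, false)) C)

/-- A resolution derivation of the clause `A` from the CNF formula `F`. -/
structure ResDerivation {V : Type} [DecidableEq V] (F : Set (RClause V)) (A : RClause V) where
  len : ℕ
  cfg : ℕ → RConfig V
  init : cfg 0 = ∅
  final : cfg len = {A}
  steps : ∀ t < len, ResStep F (cfg t) (cfg (t + 1))

/-- A resolution refutation of `F` is a derivation of the empty clause from `F`. -/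
abbrev ResRefutation {V : Type} [DecidableEq V] (F : Set (RClause V)) :=
  ResDerivation F (∅ : RClause V)

namespace ResDerivation

variable {V : Type} [DecidableEq V] {F : Set (RClause V)} {A : RClause V}

/-- The clause space of a derivation: the maximal number of clauses in memory. -/
def space (π : ResDerivation F A) : ℕ :=
  (Finset.range (π.len + 1)).sup fun t => (π.cfg t).card

/-- The set of distinct clauses appearing in a derivation. -/
def clauses (π : ResDerivation F A) : Finset (RClause V) :=
  (Finset.range (π.len + 1)).sup π.cfg

/-- The length of a derivation: the number of distinct clauses appearing in it. -/
def length (π : ResDerivation F A) : ℕ := π.clauses.card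

/-- The width of a derivation: the size of a largest clause appearing in it. -/
def width (π : ResDerivation F A) : ℕ :=
  (Finset.range (π.len + 1)).sup fun t => (π.cfg t).sup Finset.card

/-- The variable space of a derivation: the maximal total number of literals in memory. -/
def varSpace (π : ResDerivation F A) : ℕ :=
  (Finset.range (π.len + 1)).sup fun t => ∑ C ∈ π.cfg t, C.card

end ResDerivation

/-- Minimum clause space of any resolution refutation of `F`. -/
noncomputable def spMin {V : Type} [DecidableEq V] (F : Set (RClause V)) : ℕ :=
  sInf { s | ∃ π : ResRefutation F, π.space = s }

/-- Minimum variable space of any resolution refutation of `F`. -/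
noncomputable def varSpMin {V : Type} [DecidableEq V] (F : Set (RClause V)) : ℕ :=
  sInf { s | ∃ π : ResRefutation F, π.varSpace = s }

/-- Minimum width of any resolution refutation of `F`. -/
noncomputable def widthMin {V : Type} [DecidableEq V] (F : Set (RClause V)) : ℕ :=
  sInf { w | ∃ π : ResRefutation F, π.width = w }

/-- The size of a CNF formula: total number of literals counted with repetition. -/
def cnfSize {V : Type} (F : Finset (RClause V)) : ℕ := ∑ C ∈ F, C.card

/-- The set of variables occurring in a clause. -/
def clauseVars {V : Type} [DecidableEq V] (C : RClause V) : Finset V := C.image Prod.fst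
/-- The clause `x(v)₁ ∨ ... ∨ x(v)_d`. -/
def posCl {V : Type} [DecidableEq V] (d : ℕ) (v : V) : RClause (V × Fin d) :=
  (Finset.univ : Finset (Fin d)).image fun j => ((v, j), true)
/-- A DAG with a unique sink in which every vertex has indegree `0` (the
sources) or `2`. `pred v` is the finite set of immediate predecessors of `v`;
acyclicity is expressed by well-foundedness of the edge relation. -/
structure PebDag (V : Type) where
  pred : V → Finset V
  wf : WellFounded fun u v => u ∈ pred v
  indeg : ∀ v, (pred v).card = 0 ∨ (pred v).card = 2
  sink : V
  sink_unique : ∀ v, (∀ w, v ∉ pred w) ↔ v = sink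

/-- The `d`-th degree pebbling contradiction `Peb_G^d`: source axioms,
pebbling axioms, and target axioms. -/
def pebCnf {V : Type} [DecidableEq V] (G : PebDag V) (d : ℕ) :
    Set (RClause (V × Fin d)) :=
  { C |
    (∃ s : V, G.pred s = ∅ ∧ C = posCl d s) ∨
    (∃ w u v : V, G.pred w = {u, v} ∧ u ≠ v ∧ ∃ i j : Fin d,
      C = insert ((u, i), false) (insert ((v, j), false) (posCl d w))) ∨
    (∃ i : Fin d, C = {((G.sink, i), false)}) }

/-- The formula `*Peb_G^d`: the pebbling contradiction with the target axioms
removed. -/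
def pebStarCnf {V : Type} [DecidableEq V] (G : PebDag V) (d : ℕ) :
    Set (RClause (V × Fin d)) :=
  { C |
    (∃ s : V, G.pred s = ∅ ∧ C = posCl d s) ∨
    (∃ w u v : V, G.pred w = {u, v} ∧ u ≠ v ∧ ∃ i j : Fin d,
      C = insert ((u, i), false) (insert ((v, j), false) (posCl d w))) }

section FW

variable {V : Type} [DecidableEq V]

def Res (C₁ C₂ D : RClause V) : Prop :=
  ∃ x, (x, true) ∈ C₁ ∧ (x, false) ∈ C₂ ∧ D = C₁.erase (x, true) ∪ C₂.erase (x, false)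

def GoodFrom (F Γ : Set (RClause V)) (M : List (RClause V)) : Prop :=
  ∀ t (ht : t < M.length), M[t] ∈ F ∨
    ∃ C₁ C₂, (C₁ ∈ Γ ∨ C₁ ∈ M.take t) ∧ (C₂ ∈ Γ ∨ C₂ ∈ M.take t) ∧ Res C₁ C₂ M[t]

theorem GoodFrom.mono {F Γ Γ' : Set (RClause V)} {M} (h : GoodFrom F Γ M) (hΓ : Γ ⊆ Γ') :
    GoodFrom F Γ' M := by
  intro t ht
  rcases h t ht with h | ⟨C₁, C₂, h₁, h₂, hres⟩
  · exact Or.inl h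
  · exact Or.inr ⟨C₁, C₂, h₁.imp (@hΓ C₁) id, h₂.imp (@hΓ C₂) id, hres⟩

theorem goodFrom_nil {F Γ : Set (RClause V)} : GoodFrom F Γ [] := by
  intro t ht; simp at ht

theorem goodFrom_axioms {F Γ : Set (RClause V)} {M : List (RClause V)}
    (h : ∀ C ∈ M, C ∈ F) : GoodFrom F Γ M :=
  fun t ht => Or.inl (h _ (List.getElem_mem ht))

theorem GoodFrom.append {F Γ : Set (RClause V)} {L M : List (RClause V)}
    (hL : GoodFrom F Γ L) (hM : GoodFrom F (Γ ∪ {C | C ∈ L}) M) :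
    GoodFrom F Γ (L ++ M) := by
  intro t ht
  rcases Nat.lt_or_ge t L.length with h | h
  · have e : (L ++ M)[t] = L[t] := List.getElem_append_left h
    have etake : (L ++ M).take t = L.take t := by
      rw [List.take_append]
      have h0 : t - L.length = 0 := by omega
      simp [h0]
    rw [e, etake]
    rcases hL t h with hax | ⟨C₁, C₂, h₁, h₂, hres⟩
    · exact Or.inl hax
    · exact Or.inr ⟨C₁, C₂, h₁, h₂, hres⟩
  · have e : (L ++ M)[t] = M[t - L.length]'(by simp at ht ⊢; omega) :=
      List.getElem_append_right h
    have etake : (L ++ M).take t = L ++ M.take (t - L.length) := by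
      rw [List.take_append, List.take_of_length_le h]
    rw [e, etake]
    rcases hM (t - L.length) (by simp at ht; omega) with hax | ⟨C₁, C₂, h₁, h₂, hres⟩
    · exact Or.inl hax
    · refine Or.inr ⟨C₁, C₂, ?_, ?_, hres⟩
      · rcases h₁ with (h₁ | h₁) | h₁
        · exact Or.inl h₁
        · exact Or.inr (List.mem_append_left _ h₁)
        · exact Or.inr (List.mem_append_right _ h₁)
      · rcases h₂ with (h₂ | h₂) | h₂
        · exact Or.inl h₂
        · exact Or.inr (List.mem_append_left _ h₂)
        · exact Or.inr (List.mem_append_right _ h₂)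

theorem GoodFrom.append' {F Γ : Set (RClause V)} {L M : List (RClause V)}
    (hL : GoodFrom F Γ L) (hM : GoodFrom F Γ M) : GoodFrom F Γ (L ++ M) :=
  hL.append (hM.mono Set.subset_union_left)

theorem goodFrom_join {F Γ : Set (RClause V)} {n : ℕ} {g : Fin n → List (RClause V)}
    (h : ∀ k, GoodFrom F Γ (g k)) : GoodFrom F Γ (List.ofFn g).flatten := by
  induction n with
  | zero => simpa using goodFrom_nil
  | succ m ih =>
      rw [List.ofFn_succ, List.flatten_cons]
      exact (h 0).append' (ih fun k => h k.succ)

theorem goodFrom_chain {F Γ : Set (RClause V)} {n : ℕ} (f : ℕ → RClause V)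
    (h : ∀ i < n, ∃ C₁ C₂, (C₁ ∈ Γ ∨ (0 < i ∧ C₁ = f (i - 1))) ∧ C₂ ∈ Γ ∧ Res C₁ C₂ (f i)) :
    GoodFrom F Γ (List.ofFn fun k : Fin n => f (k : ℕ)) := by
  intro t ht
  have htn : t < n := by simpa using ht
  obtain ⟨C₁, C₂, h₁, h₂, hres⟩ := h t htn
  have hget : (List.ofFn fun k : Fin n => f (k : ℕ))[t] = f t := by
    simp
  rw [hget]
  refine Or.inr ⟨C₁, C₂, ?_, Or.inl h₂, hres⟩
  rcases h₁ with h₁ | ⟨hpos, rfl⟩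
  · exact Or.inl h₁
  · refine Or.inr ?_
    rw [List.mem_iff_getElem]
    have hlen : ((List.ofFn fun k : Fin n => f (k : ℕ)).take t).length = t := by
      simp; omega
    refine ⟨t - 1, by omega, ?_⟩
    rw [List.getElem_take]
    simp


end FW

section Bridge
variable {V : Type} [DecidableEq V]

theorem ResDerivation.cfg_subset_clauses {F : Set (RClause V)} {A : RClause V}
    (π : ResDerivation F A) {t : ℕ} (ht : t ≤ π.len) : π.cfg t ⊆ π.clauses :=
  Finset.le_sup (f := π.cfg) (Finset.mem_range.mpr (by omega))

theorem ResDerivation.width_le_sup {F : Set (RClause V)} {A : RClause V}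
    (π : ResDerivation F A) : π.width ≤ π.clauses.sup Finset.card := by
  refine Finset.sup_le fun t ht => ?_
  refine Finset.sup_mono (π.cfg_subset_clauses ?_)
  have := Finset.mem_range.mp ht; omega

theorem exists_refutation (F : Set (RClause V)) (L : List (RClause V))
    (hL : GoodFrom F ∅ L) (h0 : (∅ : RClause V) ∈ L) :
    ∃ π : ResRefutation F, π.clauses = L.toFinset := by
  classical
  set n := L.length with hn
  set D := (L.toFinset.erase ∅).toList with hDdef
  set m := D.length with hm
  have hnodup : D.Nodup := Finset.nodup_toList _
  set cfg : ℕ → RConfig V := fun t =>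
    if t ≤ n then (L.take t).toFinset else L.toFinset \ (D.take (t - n)).toFinset with hcfg
  have cfg1 : ∀ t ≤ n, cfg t = (L.take t).toFinset := fun t ht => if_pos ht
  have cfg2 : ∀ k ≤ m, cfg (n + k) = L.toFinset \ (D.take k).toFinset := by
    intro k hk
    rcases Nat.eq_zero_or_pos k with rfl | hpos
    · rw [cfg1 (n + 0) (by omega)]
      simp only [hn, Nat.add_zero, List.take_length, List.take_zero, List.toFinset_nil,
        Finset.sdiff_empty]
    · simp only [hcfg]
      rw [if_neg (by omega)]
      have e : n + k - n = k := by omega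
      rw [e]
  have key_take : ∀ (l : List (RClause V)) (t : ℕ) (h : t < l.length),
      (l.take (t + 1)).toFinset = insert l[t] (l.take t).toFinset := by
    intro l t h
    rw [List.take_succ, List.getElem?_eq_getElem h, Option.toList_some, List.toFinset_append,
      List.toFinset_cons, List.toFinset_nil, Finset.union_comm]
    simp
  have hDfin : D.toFinset = L.toFinset.erase ∅ := by
    rw [hDdef, Finset.toList_toFinset]
  refine ⟨⟨n + m, cfg, ?_, ?_, ?_⟩, ?_⟩
  · rw [cfg1 0 (Nat.zero_le _)]
    simp only [List.take_zero, List.toFinset_nil]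
  · rw [cfg2 m le_rfl, hm, List.take_length, hDfin]
    ext C
    simp only [Finset.mem_sdiff, Finset.mem_erase, Finset.mem_singleton, List.mem_toFinset]
    constructor
    · rintro ⟨h1, h2⟩
      by_contra hne
      exact h2 ⟨hne, h1⟩
    · rintro rfl
      exact ⟨h0, fun h => h.1 rfl⟩
  · intro t ht
    rcases Nat.lt_or_ge t n with ht' | ht'
    · rw [cfg1 t (Nat.le_of_lt ht'), cfg1 (t + 1) (by omega), key_take L t ht']
      rcases hL t ht' with hax | ⟨C₁, C₂, h₁, h₂, x, hx₁, hx₂, heq⟩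
      · exact ResStep.download hax
      · have h₁' : C₁ ∈ (L.take t).toFinset :=
          List.mem_toFinset.mpr (h₁.resolve_left (by simp))
        have h₂' : C₂ ∈ (L.take t).toFinset :=
          List.mem_toFinset.mpr (h₂.resolve_left (by simp))
        rw [heq]
        exact ResStep.infer h₁' h₂' hx₁ hx₂
    · obtain ⟨k, rfl⟩ : ∃ k, t = n + k := ⟨t - n, by omega⟩
      have hk : k < m := by omega
      have hkD : k < D.length := hk
      have hstep : cfg (n + k + 1) = (cfg (n + k)).erase D[k] := by
        rw [show n + k + 1 = n + (k + 1) from rfl, cfg2 _ hk, cfg2 _ (Nat.le_of_lt hk),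
          key_take D k hkD]
        ext C
        simp only [Finset.mem_sdiff, Finset.mem_erase, Finset.mem_insert, List.mem_toFinset]
        tauto
      rw [hstep]
      refine ResStep.delete ?_
      rw [cfg2 _ (Nat.le_of_lt hk), Finset.mem_sdiff]
      constructor
      · have : D[k] ∈ D := List.getElem_mem hkD
        rw [← List.mem_toFinset, hDfin] at this
        exact Finset.mem_of_mem_erase this
      · intro hmem
        rw [List.mem_toFinset] at hmem
        obtain ⟨i, hi, hieq⟩ := List.mem_iff_getElem.mp hmem
        rw [List.getElem_take] at hieq
        have hik : i = k := (List.Nodup.getElem_inj_iff hnodup).mp hieq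
        rw [List.length_take] at hi
        omega
  · show (Finset.range (n + m + 1)).sup cfg = L.toFinset
    apply le_antisymm
    · apply Finset.sup_le
      intro t ht
      rcases le_or_gt t n with h | h
      · rw [cfg1 t h]
        intro C hC
        rw [List.mem_toFinset] at hC ⊢
        exact List.mem_of_mem_take hC
      · simp only [hcfg]
        rw [if_neg (by omega)]
        exact Finset.sdiff_subset
    · have hcn : cfg n = L.toFinset := by rw [cfg1 n le_rfl, hn, List.take_length]
      rw [← hcn]
      exact Finset.le_sup (Finset.mem_range.mpr (by omega))

end Bridge

section Peb
variable {V : Type} [DecidableEq V]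

/-- The clause `x(v)_j ∨ x(v)_{j+1} ∨ ... ∨ x(v)_{d-1}`. -/
def geCl (d : ℕ) (v : V) (j : ℕ) : RClause (V × Fin d) :=
  (Finset.univ.filter fun k : Fin d => j ≤ (k : ℕ)).image fun k => ((v, k), true)

lemma posCl_eq_geCl (d : ℕ) (v : V) : posCl d v = geCl d v 0 := by
  simp [posCl, geCl]

lemma mem_geCl {d : ℕ} {v : V} {j : ℕ} {k : Fin d} :
    ((v, k), true) ∈ geCl d v j ↔ j ≤ (k : ℕ) := by
  simp [geCl]

lemma mem_posCl {d : ℕ} {v : V} {k : Fin d} : ((v, k), true) ∈ posCl d v := by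
  simp [posCl]

lemma not_mem_geCl_false {d : ℕ} {v a : V} {i : Fin d} {j : ℕ} :
    ((a, i), false) ∉ geCl d v j := by
  simp [geCl]

lemma not_mem_posCl_false {d : ℕ} {v a : V} {i : Fin d} :
    ((a, i), false) ∉ posCl d v := by
  simp [posCl]

lemma not_mem_geCl_ne {d : ℕ} {v a : V} (h : a ≠ v) {i : Fin d} {b : Bool} {j : ℕ} :
    ((a, i), b) ∉ geCl d v j := by
  simp only [geCl, Finset.mem_image, Finset.mem_filter]
  rintro ⟨k, -, hk⟩
  exact h (congrArg (fun p => p.1.1) hk).symm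

lemma not_mem_posCl_ne {d : ℕ} {v a : V} (h : a ≠ v) {i : Fin d} {b : Bool} :
    ((a, i), b) ∉ posCl d v := by
  rw [posCl_eq_geCl]; exact not_mem_geCl_ne h

lemma geCl_of_le {d j : ℕ} (h : d ≤ j) (v : V) : geCl d v j = ∅ := by
  ext x
  simp only [geCl, Finset.mem_image, Finset.mem_filter, Finset.mem_univ, true_and,
    Finset.notMem_empty, iff_false]
  rintro ⟨k, hk, -⟩
  have := k.isLt
  omega

lemma geCl_erase {d : ℕ} (v : V) (j : ℕ) (k : Fin d) (hk : (k : ℕ) = j) :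
    (geCl d v j).erase ((v, k), true) = geCl d v (j + 1) := by
  have hinj : Function.Injective (fun k : Fin d => (((v, k), true) : (V × Fin d) × Bool)) := by
    intro a b h
    simpa using h
  rw [geCl, ← Finset.image_erase hinj]
  congr 1
  ext m
  simp only [Finset.mem_erase, Finset.mem_filter, Finset.mem_univ, true_and, Ne,
    Fin.ext_iff, hk]
  omega

lemma posCl_erase {d : ℕ} (v : V) (k : Fin d) (hk : (k : ℕ) = 0) :
    (posCl d v).erase ((v, k), true) = geCl d v 1 := by
  rw [posCl_eq_geCl]
  exact geCl_erase v 0 k hk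

lemma erase_posCl_ne {d : ℕ} {v w : V} (h : v ≠ w) (k : Fin d) (b : Bool) :
    (posCl d w).erase ((v, k), b) = posCl d w :=
  Finset.erase_eq_of_notMem (not_mem_posCl_ne h)

lemma card_geCl_le {d : ℕ} (v : V) (j : ℕ) : (geCl d v j).card ≤ d :=
  le_trans Finset.card_image_le (le_trans (Finset.card_filter_le _ _) (by simp))

lemma card_posCl_le {d : ℕ} (v : V) : (posCl d v).card ≤ d := by
  rw [posCl_eq_geCl]; exact card_geCl_le v 0

/-- The pebbling axiom for `w` with predecessors `u`, `v`. -/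
def pebAx (d : ℕ) (u v w : V) (i j : Fin d) : RClause (V × Fin d) :=
  insert ((u, i), false) (insert ((v, j), false) (posCl d w))

/-- Intermediate clause in the first resolution chain. -/
def bCl (d : ℕ) (u v w : V) (j : Fin d) (i : ℕ) : RClause (V × Fin d) :=
  geCl d u (i + 1) ∪ insert ((v, j), false) (posCl d w)

/-- Intermediate clause in the second resolution chain. -/
def eCl (d : ℕ) (v w : V) (j : ℕ) : RClause (V × Fin d) :=
  geCl d v j ∪ posCl d w

lemma eraseIns {d : ℕ} {u v w : V} (huv : u ≠ v) (huw : u ≠ w) (j : Fin d) (k : Fin d)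
    (b : Bool) :
    (insert ((v, j), false) (posCl d w)).erase ((u, k), b) =
      insert ((v, j), false) (posCl d w) := by
  apply Finset.erase_eq_of_notMem
  simp only [Finset.mem_insert, Prod.mk.injEq]
  push_neg
  exact ⟨fun h => absurd h.1 huv, not_mem_posCl_ne huw⟩

lemma eraseA {d : ℕ} {u v w : V} (huv : u ≠ v) (huw : u ≠ w) (i j : Fin d) :
    (pebAx d u v w i j).erase ((u, i), false) = insert ((v, j), false) (posCl d w) := by
  rw [pebAx]
  apply Finset.erase_insert
  simp only [Finset.mem_insert, Prod.mk.injEq]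
  push_neg
  exact ⟨fun h => absurd h.1 huv, not_mem_posCl_ne huw⟩

end Peb

section Peb2
variable {V : Type} [DecidableEq V]

/-- The local derivation list for a non-source vertex `w` with predecessors `u`, `v`. -/
def locNS (d : ℕ) (u v w : V) : List (RClause (V × Fin d)) :=
  (List.ofFn fun i : Fin d => List.ofFn fun j : Fin d => pebAx d u v w i j).flatten
    ++ ((List.ofFn fun j : Fin d => List.ofFn fun i : Fin d => bCl d u v w j (i : ℕ)).flatten
      ++ List.ofFn fun j : Fin d => eCl d v w ((j : ℕ) + 1))

lemma goodFrom_locNS {d : ℕ} (hd : 1 ≤ d) {G : PebDag V} {u v w : V}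
    (hpred : G.pred w = {u, v}) (huv : u ≠ v) (huw : u ≠ w) (hvw : v ≠ w)
    {Γ : Set (RClause (V × Fin d))} (hu : posCl d u ∈ Γ) (hv : posCl d v ∈ Γ) :
    GoodFrom (pebCnf G d) Γ (locNS d u v w) := by
  have hax : ∀ (i j : Fin d), pebAx d u v w i j ∈ pebCnf G d := fun i j =>
    Or.inr (Or.inl ⟨w, u, v, hpred, huv, i, j, rfl⟩)
  apply GoodFrom.append
  · apply goodFrom_axioms
    intro C hC
    rw [List.mem_flatten] at hC
    obtain ⟨l, hl, hC⟩ := hC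
    obtain ⟨i, rfl⟩ := List.mem_ofFn.mp hl
    obtain ⟨j, rfl⟩ := List.mem_ofFn.mp hC
    exact hax i j
  · apply GoodFrom.append
    · apply goodFrom_join
      intro j
      apply goodFrom_chain (f := fun i => bCl d u v w j i)
      intro i hi
      refine ⟨if i = 0 then posCl d u else bCl d u v w j (i - 1),
        pebAx d u v w ⟨i, hi⟩ j, ?_, ?_, ?_⟩
      · rcases Nat.eq_zero_or_pos i with rfl | hpos
        · rw [if_pos rfl]
          exact Or.inl (Set.mem_union_left _ hu)
        · rw [if_neg (by omega)]
          exact Or.inr ⟨hpos, rfl⟩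
      · refine Set.mem_union_right _ ?_
        show _ ∈ List.flatten _
        rw [List.mem_flatten]
        refine ⟨_, List.mem_ofFn.mpr ⟨⟨i, hi⟩, rfl⟩, ?_⟩
        exact List.mem_ofFn.mpr ⟨j, rfl⟩
      · refine ⟨((u, ⟨i, hi⟩) : V × Fin d), ?_, ?_, ?_⟩
        · rcases Nat.eq_zero_or_pos i with rfl | hpos
          · rw [if_pos rfl]; exact mem_posCl
          · rw [if_neg (by omega), bCl]
            apply Finset.mem_union_left
            rw [mem_geCl]
            simp only [Fin.val_mk]
            omega
        · rw [pebAx]; exact Finset.mem_insert_self _ _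
        · rw [eraseA huv huw]
          rcases Nat.eq_zero_or_pos i with rfl | hpos
          · rw [if_pos rfl, posCl_erase u ⟨0, hi⟩ rfl]
            rfl
          · rw [if_neg (by omega)]
            have h1 : (bCl d u v w j (i - 1)).erase ((u, ⟨i, hi⟩), true)
                = geCl d u (i + 1) ∪ insert ((v, j), false) (posCl d w) := by
              rw [bCl, Finset.erase_union_distrib, eraseIns huv huw,
                geCl_erase u (i - 1 + 1) ⟨i, hi⟩ (by simp only [Fin.val_mk]; omega)]
              have e : i - 1 + 1 + 1 = i + 1 := by omega
              rw [e]
            rw [h1, Finset.union_assoc, Finset.union_self]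
            show bCl d u v w j i = geCl d u (i + 1) ∪ _
            rw [bCl]
    · apply goodFrom_chain (f := fun j => eCl d v w (j + 1))
      intro j hj
      refine ⟨if j = 0 then posCl d v else eCl d v w j,
        bCl d u v w ⟨j, hj⟩ (d - 1), ?_, ?_, ?_⟩
      · rcases Nat.eq_zero_or_pos j with rfl | hpos
        · rw [if_pos rfl]
          exact Or.inl (Set.mem_union_left _ (Set.mem_union_left _ hv))
        · rw [if_neg (by omega)]
          refine Or.inr ⟨hpos, ?_⟩
          show eCl d v w j = eCl d v w (j - 1 + 1)
          congr 1
          omega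
      · refine Set.mem_union_right _ ?_
        show _ ∈ List.flatten _
        rw [List.mem_flatten]
        refine ⟨_, List.mem_ofFn.mpr ⟨⟨j, hj⟩, rfl⟩, ?_⟩
        exact List.mem_ofFn.mpr ⟨⟨d - 1, by omega⟩, rfl⟩
      · have hbcl : bCl d u v w ⟨j, hj⟩ (d - 1) =
            insert ((v, ⟨j, hj⟩), false) (posCl d w) := by
          rw [bCl, geCl_of_le (by omega), Finset.empty_union]
        refine ⟨((v, ⟨j, hj⟩) : V × Fin d), ?_, ?_, ?_⟩
        · rcases Nat.eq_zero_or_pos j with rfl | hpos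
          · rw [if_pos rfl]; exact mem_posCl
          · rw [if_neg (by omega), eCl]
            exact Finset.mem_union_left _ (mem_geCl.mpr (by simp))
        · rw [hbcl]; exact Finset.mem_insert_self _ _
        · rw [hbcl, Finset.erase_insert not_mem_posCl_false]
          rcases Nat.eq_zero_or_pos j with rfl | hpos
          · rw [if_pos rfl, posCl_erase v ⟨0, hj⟩ rfl]
            rfl
          · rw [if_neg (by omega)]
            have h1 : (eCl d v w j).erase ((v, ⟨j, hj⟩), true)
                = geCl d v (j + 1) ∪ posCl d w := by
              rw [eCl, Finset.erase_union_distrib, erase_posCl_ne hvw,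
                geCl_erase v j ⟨j, hj⟩ rfl]
            rw [h1, Finset.union_assoc, Finset.union_self]
            rfl

end Peb2

section Peb3
variable {V : Type} [DecidableEq V]

/-- A choice of the two predecessors of a non-source vertex. -/
noncomputable def prUV (G : PebDag V) (w : V) : V × V :=
  if h : (G.pred w).card = 2 then
    ((Finset.card_eq_two.mp h).choose, (Finset.card_eq_two.mp h).choose_spec.choose)
  else (w, w)

lemma prUV_spec {G : PebDag V} {w : V} (h : (G.pred w).card = 2) :
    (prUV G w).1 ≠ (prUV G w).2 ∧ G.pred w = {(prUV G w).1, (prUV G w).2} := by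
  rw [prUV, dif_pos h]
  exact ⟨(Finset.card_eq_two.mp h).choose_spec.choose_spec.1,
    (Finset.card_eq_two.mp h).choose_spec.choose_spec.2⟩

lemma prUV_mem1 {G : PebDag V} {w : V} (h : (G.pred w).card = 2) :
    (prUV G w).1 ∈ G.pred w := by
  rw [(prUV_spec h).2]; exact Finset.mem_insert_self _ _

lemma prUV_mem2 {G : PebDag V} {w : V} (h : (G.pred w).card = 2) :
    (prUV G w).2 ∈ G.pred w := by
  rw [(prUV_spec h).2]
  exact Finset.mem_insert_of_mem (Finset.mem_singleton_self _)

lemma pred_ne {G : PebDag V} {u w : V} (h : u ∈ G.pred w) : u ≠ w := by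
  rintro rfl
  revert h
  induction u using G.wf.induction with
  | _ a ih => exact fun hr => ih a hr hr

/-- The local derivation list for a vertex. -/
noncomputable def locList (G : PebDag V) (d : ℕ) (w : V) : List (RClause (V × Fin d)) :=
  if (G.pred w).card = 2 then locNS d (prUV G w).1 (prUV G w).2 w else [posCl d w]

/-- The full derivation list for a vertex, by well-founded recursion. -/
noncomputable def mainList (G : PebDag V) (d : ℕ) : V → List (RClause (V × Fin d)) :=
  G.wf.fix fun w ih =>
    (if h : (G.pred w).card = 2 then
       ih (prUV G w).1 (prUV_mem1 h) ++ ih (prUV G w).2 (prUV_mem2 h)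
     else []) ++ locList G d w

lemma mainList_eq (G : PebDag V) (d : ℕ) (w : V) :
    mainList G d w =
      (if _ : (G.pred w).card = 2 then
         mainList G d (prUV G w).1 ++ mainList G d (prUV G w).2
       else []) ++ locList G d w := by
  rw [mainList, WellFounded.fix_eq]

lemma posCl_mem_locList {d : ℕ} (hd : 1 ≤ d) (G : PebDag V) (w : V) :
    posCl d w ∈ locList G d w := by
  rw [locList]
  split_ifs with h
  · rw [locNS]
    refine List.mem_append_right _ (List.mem_append_right _ ?_)
    refine List.mem_ofFn.mpr ⟨⟨d - 1, by omega⟩, ?_⟩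
    show eCl d _ w (d - 1 + 1) = posCl d w
    rw [eCl, show d - 1 + 1 = d by omega, geCl_of_le le_rfl, Finset.empty_union]
  · exact List.mem_singleton_self _

lemma posCl_mem_mainList {d : ℕ} (hd : 1 ≤ d) (G : PebDag V) (w : V) :
    posCl d w ∈ mainList G d w := by
  rw [mainList_eq]
  exact List.mem_append_right _ (posCl_mem_locList hd G w)

lemma goodFrom_mainList {d : ℕ} (hd : 1 ≤ d) (G : PebDag V) (w : V) :
    GoodFrom (pebCnf G d) ∅ (mainList G d w) := by
  induction w using G.wf.induction with
  | _ w ih =>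
    rw [mainList_eq]
    by_cases h : (G.pred w).card = 2
    · rw [dif_pos h]
      have hspec := prUV_spec h
      refine GoodFrom.append ((ih _ (prUV_mem1 h)).append' (ih _ (prUV_mem2 h))) ?_
      rw [locList, if_pos h]
      refine goodFrom_locNS hd hspec.2 hspec.1 (pred_ne (prUV_mem1 h))
        (pred_ne (prUV_mem2 h)) ?_ ?_
      · exact Set.mem_union_right _ (List.mem_append_left _ (posCl_mem_mainList hd G _))
      · exact Set.mem_union_right _ (List.mem_append_right _ (posCl_mem_mainList hd G _))
    · rw [dif_neg h, List.nil_append, locList, if_neg h]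
      apply goodFrom_axioms
      intro C hC
      rw [List.mem_singleton] at hC
      subst hC
      refine Or.inl ⟨w, ?_, rfl⟩
      exact Finset.card_eq_zero.mp ((G.indeg w).resolve_right h)

lemma mainList_subset [Fintype V] (G : PebDag V) (d : ℕ) (w : V) :
    (mainList G d w).toFinset ⊆ Finset.univ.biUnion fun v => (locList G d v).toFinset := by
  induction w using G.wf.induction with
  | _ w ih =>
    rw [mainList_eq]
    intro C hC
    rw [List.toFinset_append, Finset.mem_union] at hC
    rcases hC with hC | hC
    · by_cases h : (G.pred w).card = 2
      · rw [dif_pos h, List.toFinset_append, Finset.mem_union] at hC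
        rcases hC with hC | hC
        · exact ih _ (prUV_mem1 h) hC
        · exact ih _ (prUV_mem2 h) hC
      · rw [dif_neg h] at hC
        simp at hC
    · exact Finset.mem_biUnion.mpr ⟨w, Finset.mem_univ _, hC⟩

lemma locList_length {d : ℕ} (hd : 1 ≤ d) (G : PebDag V) (w : V) :
    (locList G d w).length ≤ 2 * d * d + d := by
  rw [locList]
  split_ifs with h
  · rw [locNS]
    simp only [List.length_append, List.length_flatten, List.map_ofFn, Function.comp,
      List.length_ofFn, List.sum_ofFn, Finset.sum_const, Finset.card_univ, Fintype.card_fin,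
      smul_eq_mul]
    nlinarith
  · simp only [List.length_singleton]
    calc 1 ≤ d := hd
    _ ≤ 2 * d * d + d := Nat.le_add_left _ _

lemma card_le_of_mem_locList {d : ℕ} (hd : 1 ≤ d) (G : PebDag V) (w : V) :
    ∀ C ∈ locList G d w, C.card ≤ 3 * d := by
  intro C hC
  rw [locList] at hC
  split_ifs at hC with h
  · rw [locNS, List.mem_append, List.mem_append] at hC
    rcases hC with hC | hC | hC
    · rw [List.mem_flatten] at hC
      obtain ⟨l, hl, hC⟩ := hC
      obtain ⟨i, rfl⟩ := List.mem_ofFn.mp hl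
      obtain ⟨j, rfl⟩ := List.mem_ofFn.mp hC
      calc (pebAx d _ _ w i j).card
          ≤ (insert (((prUV G w).2, j), false) (posCl d w)).card + 1 :=
            Finset.card_insert_le _ _
        _ ≤ (posCl d w).card + 1 + 1 := by
            have := Finset.card_insert_le (((prUV G w).2, j), false) (posCl d w)
            omega
        _ ≤ d + 1 + 1 := by have := card_posCl_le (d := d) w; omega
        _ ≤ 3 * d := by omega
    · rw [List.mem_flatten] at hC
      obtain ⟨l, hl, hC⟩ := hC
      obtain ⟨j, rfl⟩ := List.mem_ofFn.mp hl
      obtain ⟨i, rfl⟩ := List.mem_ofFn.mp hC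
      calc (bCl d _ _ w j (i : ℕ)).card
          ≤ (geCl d (prUV G w).1 ((i : ℕ) + 1)).card +
              (insert (((prUV G w).2, j), false) (posCl d w)).card := Finset.card_union_le _ _
        _ ≤ d + (d + 1) := by
            have h1 := card_geCl_le (d := d) (prUV G w).1 ((i : ℕ) + 1)
            have h2 := Finset.card_insert_le (((prUV G w).2, j), false) (posCl d w)
            have h3 := card_posCl_le (d := d) w
            omega
        _ ≤ 3 * d := by omega
    · obtain ⟨j, rfl⟩ := List.mem_ofFn.mp hC
      calc (eCl d _ w ((j : ℕ) + 1)).card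
          ≤ (geCl d (prUV G w).2 ((j : ℕ) + 1)).card + (posCl d w).card :=
            Finset.card_union_le _ _
        _ ≤ d + d := by
            have h1 := card_geCl_le (d := d) (prUV G w).2 ((j : ℕ) + 1)
            have h2 := card_posCl_le (d := d) w
            omega
        _ ≤ 3 * d := by omega
  · rw [List.mem_singleton] at hC
    subst hC
    calc (posCl d w).card ≤ d := card_posCl_le w
    _ ≤ 3 * d := by omega

end Peb3

section Peb4
variable {V : Type} [DecidableEq V]

/-- The full refutation list: derive the sink clause, then resolve with the target axioms. -/
noncomputable def topList (G : PebDag V) (d : ℕ) : List (RClause (V × Fin d)) :=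
  mainList G d G.sink ++
    ((List.ofFn fun i : Fin d => ({((G.sink, i), false)} : RClause (V × Fin d)))
      ++ List.ofFn fun i : Fin d => geCl d G.sink ((i : ℕ) + 1))

lemma goodFrom_topList {d : ℕ} (hd : 1 ≤ d) (G : PebDag V) :
    GoodFrom (pebCnf G d) ∅ (topList G d) := by
  refine GoodFrom.append (goodFrom_mainList hd G G.sink) ?_
  refine GoodFrom.append ?_ ?_
  · apply goodFrom_axioms
    intro C hC
    obtain ⟨i, rfl⟩ := List.mem_ofFn.mp hC
    exact Or.inr (Or.inr ⟨i, rfl⟩)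
  · apply goodFrom_chain (f := fun i => geCl d G.sink (i + 1))
    intro i hi
    refine ⟨if i = 0 then posCl d G.sink else geCl d G.sink i,
      {((G.sink, ⟨i, hi⟩), false)}, ?_, ?_, ?_⟩
    · rcases Nat.eq_zero_or_pos i with rfl | hpos
      · rw [if_pos rfl]
        exact Or.inl (Set.mem_union_left _ (Set.mem_union_right _ (posCl_mem_mainList hd G _)))
      · rw [if_neg (by omega)]
        refine Or.inr ⟨hpos, ?_⟩
        show geCl d G.sink i = geCl d G.sink (i - 1 + 1)
        congr 1
        omega
    · refine Set.mem_union_right _ ?_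
      exact List.mem_ofFn.mpr ⟨⟨i, hi⟩, rfl⟩
    · refine ⟨((G.sink, ⟨i, hi⟩) : V × Fin d), ?_, Finset.mem_singleton_self _, ?_⟩
      · rcases Nat.eq_zero_or_pos i with rfl | hpos
        · rw [if_pos rfl]; exact mem_posCl
        · rw [if_neg (by omega)]
          exact mem_geCl.mpr (by simp)
      · have hsing : ({((G.sink, ⟨i, hi⟩), false)} : RClause (V × Fin d)).erase
            ((G.sink, ⟨i, hi⟩), false) = ∅ := Finset.erase_singleton _
        rw [hsing, Finset.union_empty]
        rcases Nat.eq_zero_or_pos i with rfl | hpos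
        · rw [if_pos rfl, posCl_erase _ ⟨0, hi⟩ rfl]
        · rw [if_neg (by omega), geCl_erase _ i ⟨i, hi⟩ rfl]

lemma empty_mem_topList {d : ℕ} (hd : 1 ≤ d) (G : PebDag V) :
    (∅ : RClause (V × Fin d)) ∈ topList G d := by
  rw [topList]
  refine List.mem_append_right _ (List.mem_append_right _ ?_)
  refine List.mem_ofFn.mpr ⟨⟨d - 1, by omega⟩, ?_⟩
  show geCl d G.sink (d - 1 + 1) = ∅
  rw [show d - 1 + 1 = d by omega]
  exact geCl_of_le le_rfl G.sink

lemma topList_card [Fintype V] {d : ℕ} (hd : 1 ≤ d) (G : PebDag V) :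
    (topList G d).toFinset.card ≤ 5 * d ^ 2 * Fintype.card V := by
  have hV : 1 ≤ Fintype.card V := Fintype.card_pos_iff.mpr ⟨G.sink⟩
  set T : List (RClause (V × Fin d)) :=
    (List.ofFn fun i : Fin d => ({((G.sink, i), false)} : RClause (V × Fin d)))
      ++ List.ofFn fun i : Fin d => geCl d G.sink ((i : ℕ) + 1) with hT
  have h1 : (topList G d).toFinset ⊆
      (Finset.univ.biUnion fun v => (locList G d v).toFinset) ∪ T.toFinset := by
    rw [topList, List.toFinset_append]
    exact Finset.union_subset_union (mainList_subset G d G.sink) (le_refl _)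
  have h2 : ((Finset.univ.biUnion fun v => (locList G d v).toFinset) ∪ T.toFinset).card ≤
      (2 * d * d + d) * Fintype.card V + 2 * d := by
    calc ((Finset.univ.biUnion fun v => (locList G d v).toFinset) ∪ T.toFinset).card
        ≤ (Finset.univ.biUnion fun v => (locList G d v).toFinset).card + T.toFinset.card :=
          Finset.card_union_le _ _
      _ ≤ (∑ v : V, (locList G d v).toFinset.card) + T.toFinset.card := by
          have := Finset.card_biUnion_le (s := (Finset.univ : Finset V))
            (t := fun v => (locList G d v).toFinset)
          omega
      _ ≤ (∑ _v : V, (2 * d * d + d)) + T.toFinset.card := by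
          gcongr with v _
          exact le_trans (List.toFinset_card_le _) (locList_length hd G v)
      _ ≤ (2 * d * d + d) * Fintype.card V + 2 * d := by
          have hTlen : T.length = d + d := by simp [hT]
          have := le_trans (List.toFinset_card_le T) (le_of_eq hTlen)
          simp only [Finset.sum_const, Finset.card_univ, smul_eq_mul, mul_comm]
          omega
  calc (topList G d).toFinset.card ≤ _ := Finset.card_le_card h1
    _ ≤ (2 * d * d + d) * Fintype.card V + 2 * d := h2
    _ ≤ 5 * d ^ 2 * Fintype.card V := by nlinarith

lemma card_le_of_mem_topList [Fintype V] {d : ℕ} (hd : 1 ≤ d) (G : PebDag V) :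
    ∀ C ∈ topList G d, C.card ≤ 3 * d := by
  intro C hC
  rw [topList, List.mem_append, List.mem_append] at hC
  rcases hC with hC | hC | hC
  · have : C ∈ Finset.univ.biUnion fun v => (locList G d v).toFinset :=
      mainList_subset G d G.sink (List.mem_toFinset.mpr hC)
    obtain ⟨v, -, hv⟩ := Finset.mem_biUnion.mp this
    exact card_le_of_mem_locList hd G v C (List.mem_toFinset.mp hv)
  · obtain ⟨i, rfl⟩ := List.mem_ofFn.mp hC
    simp only [Finset.card_singleton]
    omega
  · obtain ⟨i, rfl⟩ := List.mem_ofFn.mp hC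
    calc (geCl d G.sink ((i : ℕ) + 1)).card ≤ d := card_geCl_le _ _
    _ ≤ 3 * d := by omega

end Peb4

/-- There is an absolute constant `c` such that for any DAG
`G` with a unique sink and all vertices of indegree 0 or 2, and any `d ≥ 1`,
there is a resolution refutation of the pebbling contradiction `Peb_G^d` of
length at most `c·d²·|V(G)|` and width at most `c·d`. -/
theorem pebbling_contradiction_short_refutation :
    ∃ c : ℕ, 0 < c ∧
      ∀ (V : Type) [DecidableEq V] [Fintype V] (G : PebDag V) (d : ℕ), 1 ≤ d →
        ∃ π : ResRefutation (pebCnf G d),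
          π.length ≤ c * d ^ 2 * Fintype.card V ∧ π.width ≤ c * d := by
  refine ⟨5, by norm_num, ?_⟩
  intro V _ _ G d hd
  obtain ⟨π, hπ⟩ := exists_refutation (pebCnf G d) (topList G d) (goodFrom_topList hd G)
    (empty_mem_topList hd G)
  refine ⟨π, ?_, ?_⟩
  · rw [ResDerivation.length, hπ]
    exact topList_card hd G
  · refine le_trans π.width_le_sup ?_
    rw [hπ]
    refine le_trans (Finset.sup_le fun C hC => ?_) (by omega : 3 * d ≤ 5 * d)
    exact card_le_of_mem_topList hd G C (List.mem_toFinset.mp hC)
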